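/- Let n ≥ 1 be an integer and let x_1, …, x_n be pairwise distinct non-negative real numbers. For each i set a_i = (Π_{j≠i} x_j) / (Π_{j≠i} (x_j − x_i)). Then Π_{i=1}^n (1 + x_i)^{a_i} = exp((1/n) Π_{i=1}^n x_i) if and only if x_i = 0 for some i ∈ {1, …, n}. -/

import Mathlib

open Finset Polynomial intervalIntegral


lemma poly_id (n : ℕ) (hn : 1 ≤ n) (x : Fin n → ℝ) (hx : ∀ i, 0 < x i)
    (hinj : Function.Injective x) (t : ℝ) :
    ∑ i, ((∏ j ∈ univ.erase i, x j) / (∏ j ∈ univ.erase i, (x j - x i))) *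
      (x i * ∏ j ∈ univ.erase i, (1 + x j * t)) = (∏ i, x i) * t ^ (n - 1) := by
  classical
  set a : Fin n → ℝ := fun i =>
    (∏ j ∈ univ.erase i, x j) / (∏ j ∈ univ.erase i, (x j - x i)) with ha
  set P : ℝ[X] := ∑ i, C (a i * x i) * ∏ j ∈ univ.erase i, (1 + C (x j) * X) with hP
  set Q : ℝ[X] := C (∏ i, x i) * X ^ (n - 1) with hQ
  have hD : ∀ i : Fin n, (∏ j ∈ univ.erase i, (x j - x i)) ≠ 0 := by
    intro i
    refine Finset.prod_ne_zero_iff.mpr fun j hj => sub_ne_zero.mpr fun h => ?_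
    exact (Finset.mem_erase.mp hj).1 (hinj h)
  have hxne : ∀ i : Fin n, x i ≠ 0 := fun i => (hx i).ne'
  have hcard : ∀ i : Fin n, (univ.erase i).card = n - 1 := by
    intro i; rw [Finset.card_erase_of_mem (mem_univ i), Finset.card_univ, Fintype.card_fin]
  have hPQ : P = Q := by
    refine Polynomial.eq_of_degrees_lt_of_eval_index_eq (v := fun i => -(x i)⁻¹)
      (univ : Finset (Fin n)) ?_ ?_ ?_ ?_
    · intro i _ j _ h
      have : (x i)⁻¹ = (x j)⁻¹ := by linarith [neg_injective h]
      exact hinj (by rw [← inv_inv (x i), this, inv_inv])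
    · -- degree P < n
      rw [Finset.card_univ, Fintype.card_fin]
      have : P.natDegree ≤ n - 1 := by
        refine Polynomial.natDegree_sum_le_of_forall_le _ _ fun i _ => ?_
        refine le_trans (Polynomial.natDegree_C_mul_le _ _) ?_
        refine le_trans (Polynomial.natDegree_prod_le _ _) ?_
        calc ∑ j ∈ univ.erase i, (1 + C (x j) * X).natDegree
            ≤ ∑ j ∈ univ.erase i, 1 := by
              refine Finset.sum_le_sum fun j _ => ?_
              refine le_trans (Polynomial.natDegree_add_le _ _) ?_
              simp only [Polynomial.natDegree_one, max_le_iff]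
              exact ⟨Nat.zero_le _, le_trans (Polynomial.natDegree_C_mul_le _ _) (by simp)⟩
          _ = n - 1 := by rw [Finset.sum_const, smul_eq_mul, mul_one, hcard]
      calc P.degree ≤ (P.natDegree : WithBot ℕ) := Polynomial.degree_le_natDegree
        _ ≤ ((n - 1 : ℕ) : WithBot ℕ) := by exact_mod_cast this
        _ < (n : WithBot ℕ) := by exact_mod_cast Nat.sub_lt hn one_pos
    · rw [Finset.card_univ, Fintype.card_fin]
      calc Q.degree ≤ (Q.natDegree : WithBot ℕ) := Polynomial.degree_le_natDegree
        _ ≤ ((n - 1 : ℕ) : WithBot ℕ) := by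
            exact_mod_cast le_trans (Polynomial.natDegree_C_mul_le _ _)
              (by simp [Polynomial.natDegree_X_pow])
        _ < (n : WithBot ℕ) := by exact_mod_cast Nat.sub_lt hn one_pos
    · intro i _
      have hevalP : P.eval (-(x i)⁻¹) =
          a i * x i * ∏ j ∈ univ.erase i, (1 + x j * (-(x i)⁻¹)) := by
        rw [hP, Polynomial.eval_finset_sum]
        rw [Finset.sum_eq_single i]
        · simp [Polynomial.eval_prod]
        · intro j _ hj
          have hi : i ∈ univ.erase j := Finset.mem_erase.mpr ⟨hj.symm, mem_univ i⟩
          rw [Polynomial.eval_mul, Polynomial.eval_prod]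
          rw [Finset.prod_eq_zero hi (by simp [hxne i]), mul_zero]
        · simp
      rw [hevalP]
      have h1 : ∏ j ∈ univ.erase i, (1 + x j * (-(x i)⁻¹)) =
          (-1:ℝ)^(n-1) * ((∏ j ∈ univ.erase i, (x j - x i)) * ((x i)⁻¹)^(n-1)) := by
        have key : ∀ j ∈ univ.erase i, (1 + x j * (-(x i)⁻¹)) =
            (-1) * ((x j - x i) * (x i)⁻¹) := by
          intro j _; field_simp
          rw [sub_div, div_self (hxne i)]; ring
        rw [Finset.prod_congr rfl key, Finset.prod_mul_distrib, Finset.prod_mul_distrib,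
          Finset.prod_const, Finset.prod_const, hcard]
      rw [h1, hQ, Polynomial.eval_mul, Polynomial.eval_pow, Polynomial.eval_C,
        Polynomial.eval_X, ← Finset.mul_prod_erase univ x (mem_univ i), ha, neg_pow,
        inv_pow]
      field_simp
      rw [div_eq_iff (mul_ne_zero (hD i) (pow_ne_zero _ (hxne i))), one_div, neg_pow (x i)⁻¹, inv_pow]
      have hinv : (x i ^ (n-1))⁻¹ * x i ^ (n-1) = 1 := inv_mul_cancel₀ (pow_ne_zero _ (hxne i))
      linear_combination (-((∏ j ∈ univ.erase i, x j) * x i * (∏ j ∈ univ.erase i, (x j - x i)) * (-1:ℝ)^(n-1))) * hinv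
  have := congrArg (Polynomial.eval t) hPQ
  rw [hP, hQ] at this
  simpa [Polynomial.eval_finset_sum, Polynomial.eval_prod, mul_assoc] using this


section
variable (n : ℕ) (x : Fin n → ℝ)

lemma frac_id (hn : 1 ≤ n) (hx : ∀ i, 0 < x i) (hinj : Function.Injective x)
    (t : ℝ) (ht : 0 ≤ t)
    (hpid : ∑ i, ((∏ j ∈ univ.erase i, x j) / (∏ j ∈ univ.erase i, (x j - x i))) *
      (x i * ∏ j ∈ univ.erase i, (1 + x j * t)) = (∏ i, x i) * t ^ (n - 1)) :
    ∑ i, ((∏ j ∈ univ.erase i, x j) / (∏ j ∈ univ.erase i, (x j - x i))) *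
      (x i / (1 + x i * t)) =
    (∏ i, x i) * t ^ (n - 1) / ∏ i, (1 + x i * t) := by
  have hden : ∀ i : Fin n, (0:ℝ) < 1 + x i * t := fun i => by
    have := mul_nonneg (hx i).le ht; linarith
  have hPP : (0:ℝ) < ∏ i, (1 + x i * t) := Finset.prod_pos fun i _ => hden i
  rw [eq_div_iff hPP.ne', Finset.sum_mul, ← hpid]
  refine Finset.sum_congr rfl fun i _ => ?_
  rw [← Finset.mul_prod_erase univ (fun j => 1 + x j * t) (mem_univ i), mul_assoc,
    ← mul_assoc (x i / (1 + x i * t)), div_mul_cancel₀ _ (hden i).ne']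

lemma log_integral (i : Fin n) (hx : ∀ i, 0 < x i) :
    ∫ t in (0:ℝ)..1, x i / (1 + x i * t) = Real.log (1 + x i) := by
  have hden : ∀ t ∈ Set.uIcc (0:ℝ) 1, (0:ℝ) < 1 + x i * t := by
    intro t ht
    rw [Set.uIcc_of_le (by norm_num : (0:ℝ) ≤ 1)] at ht
    nlinarith [(hx i).le, ht.1]
  have h := intervalIntegral.integral_eq_sub_of_hasDerivAt
    (f := fun u => Real.log (1 + x i * u)) (f' := fun t => x i / (1 + x i * t))
    (fun t ht => by
      have : HasDerivAt (fun u : ℝ => 1 + x i * u) (x i) t := by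
        simpa using ((hasDerivAt_id t).const_mul (x i)).const_add 1
      simpa using this.log (hden t ht).ne')
    (by
      apply ContinuousOn.intervalIntegrable
      exact continuousOn_const.div
        (continuousOn_const.add (continuousOn_const.mul continuousOn_id))
        (fun t ht => (hden t ht).ne'))
  simpa using h


end

lemma key_lt (n : ℕ) (hn : 1 ≤ n) (x : Fin n → ℝ) (hx : ∀ i, 0 < x i)
    (hinj : Function.Injective x)
    (hpid : ∀ t : ℝ, ∑ i, ((∏ j ∈ univ.erase i, x j) / (∏ j ∈ univ.erase i, (x j - x i))) *
      (x i * ∏ j ∈ univ.erase i, (1 + x j * t)) = (∏ i, x i) * t ^ (n - 1)) :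
    ∑ i, ((∏ j ∈ univ.erase i, x j) / (∏ j ∈ univ.erase i, (x j - x i))) *
      Real.log (1 + x i) < (1 / n) * ∏ i, x i := by
  have hne : Nonempty (Fin n) := ⟨⟨0, hn⟩⟩
  set a : Fin n → ℝ := fun i =>
    (∏ j ∈ univ.erase i, x j) / (∏ j ∈ univ.erase i, (x j - x i)) with ha
  set f : ℝ → ℝ := fun t => (∏ i, x i) * t ^ (n - 1) with hf
  set g : ℝ → ℝ := fun t => (∏ i, x i) * t ^ (n - 1) / ∏ i, (1 + x i * t) with hg
  have hden : ∀ t ∈ Set.uIcc (0:ℝ) 1, ∀ i, (0:ℝ) < 1 + x i * t := by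
    intro t ht i
    rw [Set.uIcc_of_le (by norm_num : (0:ℝ) ≤ 1)] at ht
    nlinarith [(hx i).le, ht.1]
  have hdencont : Continuous fun t : ℝ => ∏ i, (1 + x i * t) :=
    continuous_finset_prod _ fun i _ => continuous_const.add (continuous_const.mul continuous_id)
  have hfcont : Continuous f := continuous_const.mul (continuous_pow _)
  have hgcont : ContinuousOn g (Set.uIcc (0:ℝ) 1) :=
    hfcont.continuousOn.div hdencont.continuousOn
      (fun t ht => (Finset.prod_pos fun i _ => hden t ht i).ne')
  have hgint : IntervalIntegrable g MeasureTheory.volume 0 1 :=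
    hgcont.intervalIntegrable
  have hfint : IntervalIntegrable f MeasureTheory.volume 0 1 :=
    hfcont.intervalIntegrable 0 1
  have hterm : ∀ i : Fin n,
      IntervalIntegrable (fun t => a i * (x i / (1 + x i * t))) MeasureTheory.volume 0 1 := by
    intro i
    apply ContinuousOn.intervalIntegrable
    exact continuousOn_const.mul (continuousOn_const.div
      (continuousOn_const.add (continuousOn_const.mul continuousOn_id))
      (fun t ht => (hden t ht i).ne'))
  have h1 : ∑ i, a i * Real.log (1 + x i) = ∫ t in (0:ℝ)..1, g t := by
    calc ∑ i, a i * Real.log (1 + x i)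
        = ∑ i, ∫ t in (0:ℝ)..1, a i * (x i / (1 + x i * t)) := by
          refine Finset.sum_congr rfl fun i _ => ?_
          rw [intervalIntegral.integral_const_mul, log_integral n x i hx]
      _ = ∫ t in (0:ℝ)..1, ∑ i, a i * (x i / (1 + x i * t)) :=
          (intervalIntegral.integral_finset_sum fun i _ => hterm i).symm
      _ = ∫ t in (0:ℝ)..1, g t := by
          refine intervalIntegral.integral_congr fun t ht => ?_
          have ht0 : 0 ≤ t := by
            rw [Set.uIcc_of_le (by norm_num : (0:ℝ) ≤ 1)] at ht; exact ht.1
          exact frac_id n x hn hx hinj t ht0 (hpid t)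
  have h2 : (∫ t in (0:ℝ)..1, f t) = (1 / n) * ∏ i, x i := by
    rw [hf, intervalIntegral.integral_const_mul, integral_pow]
    have hnn : n - 1 + 1 = n := Nat.sub_add_cancel hn
    rw [hnn]
    have h0 : (0:ℝ) ^ n = 0 := zero_pow (by omega)
    have hcast : ((n - 1 : ℕ) : ℝ) + 1 = n := by
      push_cast [Nat.cast_sub hn]; ring
    rw [h0, one_pow, hcast]
    ring
  have h3 : (0:ℝ) < ∫ t in (0:ℝ)..1, (f t - g t) := by
    refine intervalIntegral_pos_of_pos_on (hfint.sub hgint) ?_ one_pos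
    intro t ht
    have htIcc : t ∈ Set.uIcc (0:ℝ) 1 := by
      rw [Set.uIcc_of_le (by norm_num : (0:ℝ) ≤ 1)]
      exact ⟨ht.1.le, ht.2.le⟩
    have hfpos : 0 < f t :=
      mul_pos (Finset.prod_pos fun i _ => hx i) (pow_pos ht.1 _)
    have hgt1 : 1 < ∏ i, (1 + x i * t) := by
      have := Finset.prod_lt_prod_of_nonempty (f := fun _ : Fin n => (1:ℝ))
        (g := fun i => 1 + x i * t) (s := univ)
        (fun i _ => one_pos) (fun i _ => by show (1:ℝ) < 1 + x i * t; nlinarith [mul_pos (hx i) ht.1]) Finset.univ_nonempty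
      simpa using this
    have : g t < f t := div_lt_self hfpos hgt1
    linarith
  have h4 : (∫ t in (0:ℝ)..1, (f t - g t)) =
      (∫ t in (0:ℝ)..1, f t) - ∫ t in (0:ℝ)..1, g t :=
    intervalIntegral.integral_sub hfint hgint
  rw [h1]
  rw [h4] at h3
  linarith [h2 ▸ h3]

theorem prod_one_add_pow_eq_exp_iff (n : ℕ) (hn : 1 ≤ n) (x : Fin n → ℝ)
    (hx : ∀ i, 0 ≤ x i) (hinj : Function.Injective x) :
    ∏ i, (1 + x i) ^
        ((∏ j ∈ Finset.univ.erase i, x j) / (∏ j ∈ Finset.univ.erase i, (x j - x i))) =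
      Real.exp ((1 / n) * ∏ i, x i) ↔ ∃ i, x i = 0 := by
  constructor
  · intro heq
    by_contra hne
    push_neg at hne
    have hpos : ∀ i, 0 < x i := fun i => lt_of_le_of_ne (hx i) (Ne.symm (hne i))
    have h1pos : ∀ i : Fin n, (0:ℝ) < 1 + x i := fun i => by linarith [hpos i]
    have hL : ∏ i, (1 + x i) ^
        ((∏ j ∈ Finset.univ.erase i, x j) / (∏ j ∈ Finset.univ.erase i, (x j - x i))) =
        Real.exp (∑ i, ((∏ j ∈ Finset.univ.erase i, x j) /
          (∏ j ∈ Finset.univ.erase i, (x j - x i))) * Real.log (1 + x i)) := by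
      rw [Real.exp_sum]
      refine Finset.prod_congr rfl fun i _ => ?_
      rw [Real.rpow_def_of_pos (h1pos i), mul_comm]
    rw [hL] at heq
    have hsum := Real.exp_eq_exp.mp heq
    have hlt := key_lt n hn x hpos hinj (poly_id n hn x hpos hinj)
    rw [hsum] at hlt
    exact lt_irrefl _ hlt
  · rintro ⟨k, hk⟩
    have hprod0 : ∏ i, x i = 0 := Finset.prod_eq_zero (mem_univ k) hk
    rw [hprod0, mul_zero, Real.exp_zero]
    refine Finset.prod_eq_one fun i _ => ?_
    by_cases h : i = k
    · subst h
      rw [hk, add_zero, Real.one_rpow]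
    · have hk' : k ∈ Finset.univ.erase i := Finset.mem_erase.mpr ⟨Ne.symm h, mem_univ k⟩
      rw [Finset.prod_eq_zero hk' hk, zero_div, Real.rpow_zero]
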